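/- For every odd cycle C of length 2k+1 with k ≥ 1 and k ≠ 3 (i.e., C ≠ C_7), there exists a proper 3-coloring of C such that every vertex of C is the beginning of a path on 3 vertices using all three colors. Concretely, writing C = v_0 v_1 … v_k v'_k v'_{k-1} … v'_1 v_0, the coloring c(v_0)=3, c(v_i)=c(v'_i)= i mod 3 for 1 ≤ i ≤ k-1, c(v_k)= k mod 3, c(v'_k)= k+1 mod 3 has this property. -/

import Mathlib

/-- The cycle graph on `ZMod n` (for `n ≥ 3` this is the cycle `C_n`). -/
def cycleG (n : ℕ) : SimpleGraph (ZMod n) where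
  Adj i j := i ≠ j ∧ (i = j + 1 ∨ j = i + 1)
  symm := ⟨fun i j ⟨h1, h2⟩ => ⟨h1.symm, h2.symm⟩⟩
  loopless := ⟨fun i ⟨h, _⟩ => h rfl⟩

/-- The coloring, as a function on `ℕ` (the `val` of a vertex). -/
def gg (k j : ℕ) : ℕ :=
  if j = 0 then 0 else if j ≤ k then j % 3
  else if j = k + 1 then (k + 1) % 3 else (2 * k + 1 - j) % 3

lemma gg_lt (k j : ℕ) : gg k j < 3 := by
  unfold gg; split_ifs <;> omega

lemma gg_adj (k : ℕ) (hk : 1 ≤ k) (i j : ℕ) (hi : i < 2 * k + 1)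
    (hij : j = (i + 1) % (2 * k + 1)) : gg k i ≠ gg k j := by
  rcases Nat.lt_or_ge (i + 1) (2 * k + 1) with h | h
  · rw [Nat.mod_eq_of_lt h] at hij
    subst hij
    unfold gg
    split_ifs <;> first | exact ‹False›.elim | omega
  · have hj0 : j = 0 := by
      have h2 : i + 1 = 2 * k + 1 := by omega
      rw [hij, h2, Nat.mod_self]
    subst hj0
    unfold gg
    split_ifs <;> first | exact ‹False›.elim | omega

lemma gg_colorful (k : ℕ) (hk : 1 ≤ k) (hk3 : k ≠ 3) (j : ℕ) (hj : j < 2 * k + 1) :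
    ∃ a b, a < 2 * k + 1 ∧ b < 2 * k + 1 ∧
      ((a = (j + 1) % (2 * k + 1) ∧ b = (j + 2) % (2 * k + 1)) ∨
        (j = a + 1 ∧ a = b + 1)) ∧
      gg k j ≠ gg k a ∧ gg k j ≠ gg k b ∧ gg k a ≠ gg k b := by
  by_cases hc : j = k + 1 ∨ j = 2 * k
  · -- backward path
    refine ⟨j - 1, j - 2, by omega, by omega, Or.inr ⟨by omega, by omega⟩, ?_, ?_, ?_⟩ <;>
      · rcases hc with hc | hc <;> subst hc <;> unfold gg <;>
          split_ifs <;> first | exact ‹False›.elim | omega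
  · push_neg at hc
    obtain ⟨hc1, hc2⟩ := hc
    have h1 : (j + 1) % (2 * k + 1) = j + 1 := Nat.mod_eq_of_lt (by omega)
    rcases Nat.lt_or_ge (j + 2) (2 * k + 1) with h | h
    · refine ⟨j + 1, j + 2, by omega, by omega,
        Or.inl ⟨h1.symm, (Nat.mod_eq_of_lt h).symm⟩, ?_, ?_, ?_⟩ <;>
        · unfold gg; split_ifs <;> first | exact ‹False›.elim | omega
    · have h2 : (j + 2) % (2 * k + 1) = 0 := by
        have h3 : j + 2 = 2 * k + 1 := by omega
        rw [h3, Nat.mod_self]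
      refine ⟨j + 1, 0, by omega, by omega, Or.inl ⟨h1.symm, h2.symm⟩, ?_, ?_, ?_⟩ <;>
        · unfold gg; split_ifs <;> first | exact ‹False›.elim | omega

/-- Every odd cycle `C_{2k+1}` with `k ≥ 1`, `k ≠ 3` (that is, other than
`C_7`) admits a proper 3-coloring in which every vertex begins a path on 3
vertices using all three colors. -/
theorem odd_cycle_colorful (k : ℕ) (hk : 1 ≤ k) (hk3 : k ≠ 3) :
    ∃ c : ZMod (2 * k + 1) → Fin 3,
      (∀ u w, (cycleG (2 * k + 1)).Adj u w → c u ≠ c w) ∧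
      ∀ v, ∃ (y : ZMod (2 * k + 1)) (p : (cycleG (2 * k + 1)).Walk v y),
        p.support.length = 3 ∧ (p.support.map c).Nodup := by
  haveI : NeZero (2 * k + 1) := ⟨by omega⟩
  haveI : Fact (1 < 2 * k + 1) := ⟨by omega⟩
  set n := 2 * k + 1 with hn
  refine ⟨fun x => ⟨gg k x.val, gg_lt k _⟩, ?_, ?_⟩
  · rintro u w ⟨hne, h | h⟩
    · have hval : u.val = (w.val + 1) % n := by
        rw [h, ZMod.val_add, ZMod.val_one]
      exact fun hc => gg_adj k hk w.val u.val (ZMod.val_lt w) hval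
        (congrArg Fin.val hc).symm
    · have hval : w.val = (u.val + 1) % n := by
        rw [h, ZMod.val_add, ZMod.val_one]
      exact fun hc => gg_adj k hk u.val w.val (ZMod.val_lt u) hval
        (congrArg Fin.val hc)
  · intro v
    obtain ⟨a, b, ha, hb, hrel, g1, g2, g3⟩ :=
      gg_colorful k hk hk3 v.val (ZMod.val_lt v)
    have hv : ((v.val : ℕ) : ZMod n) = v := by
      rw [ZMod.natCast_val, ZMod.cast_id]
    have hav : ((a : ZMod n)).val = a := by
      rw [ZMod.val_natCast, Nat.mod_eq_of_lt ha]
    have hbv : ((b : ZMod n)).val = b := by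
      rw [ZMod.val_natCast, Nat.mod_eq_of_lt hb]
    have hva : (cycleG n).Adj v (a : ZMod n) := by
      refine ⟨fun hc => g1 (by rw [hc, hav]), ?_⟩
      rcases hrel with ⟨ra, rb⟩ | ⟨ra, rb⟩
      · right
        rw [ra, ZMod.natCast_mod, Nat.cast_add, Nat.cast_one, hv]
      · left
        rw [← hv, ra, Nat.cast_add, Nat.cast_one]
    have hab : (cycleG n).Adj (a : ZMod n) (b : ZMod n) := by
      refine ⟨fun hc => g3 (by rw [← hav, hc, hbv]), ?_⟩
      rcases hrel with ⟨ra, rb⟩ | ⟨ra, rb⟩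
      · right
        rw [ra, rb, ZMod.natCast_mod, ZMod.natCast_mod]
        push_cast
        ring
      · left
        rw [rb, Nat.cast_add, Nat.cast_one]
    have f1 : (⟨gg k v.val, gg_lt k _⟩ : Fin 3) ≠ ⟨gg k ((a : ZMod n)).val, gg_lt k _⟩ := by
      rw [hav]; exact fun hc => g1 (congrArg Fin.val hc)
    have f2 : (⟨gg k v.val, gg_lt k _⟩ : Fin 3) ≠ ⟨gg k ((b : ZMod n)).val, gg_lt k _⟩ := by
      rw [hbv]; exact fun hc => g2 (congrArg Fin.val hc)
    have f3 : (⟨gg k ((a : ZMod n)).val, gg_lt k _⟩ : Fin 3) ≠ ⟨gg k ((b : ZMod n)).val, gg_lt k _⟩ := by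
      rw [hav, hbv]; exact fun hc => g3 (congrArg Fin.val hc)
    refine ⟨(b : ZMod n),
      SimpleGraph.Walk.cons hva (SimpleGraph.Walk.cons hab SimpleGraph.Walk.nil),
      by simp, ?_⟩
    simp only [SimpleGraph.Walk.support_cons, SimpleGraph.Walk.support_nil,
      List.map_cons, List.map_nil]
    refine List.nodup_cons.mpr ⟨?_, List.nodup_cons.mpr ⟨?_, List.nodup_singleton _⟩⟩
    · simp only [List.mem_cons, List.mem_singleton, List.not_mem_nil, or_false]
      push_neg
      exact ⟨f1, f2⟩
    · simp only [List.mem_singleton]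
      exact f3
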